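/- If N = q^k * n^2 is an odd perfect number in Eulerian form with k = 1, then I(q)·I(n) > 3/2^(1/3) − 1, where I(x) = σ(x)/x. -/

import Mathlib

/-- The sum-of-divisors function. -/
def sigma (n : ℕ) : ℕ := ∑ d ∈ n.divisors, d

/-- The abundancy index as a rational number. -/
noncomputable def Iq (x : ℕ) : ℚ := (sigma x : ℚ) / x

/-- The abundancy index as a real number. -/
noncomputable def Ir (x : ℕ) : ℝ := (sigma x : ℝ) / x

lemma sigma_eq (m : ℕ) : sigma m = ArithmeticFunction.sigma 1 m :=
  (ArithmeticFunction.sigma_one_apply m).symm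

lemma sigma_mul_coprime {a b : ℕ} (h : Nat.Coprime a b) :
    sigma (a * b) = sigma a * sigma b := by
  simp only [sigma_eq]
  exact ArithmeticFunction.isMultiplicative_sigma.map_mul_of_coprime h

lemma sigma_prime {p : ℕ} (hp : p.Prime) : sigma p = p + 1 := by
  rw [sigma, hp.divisors]
  rw [Finset.sum_pair hp.one_lt.ne]
  omega

lemma sigma_lower {m : ℕ} (hm : 1 < m) : m + 1 ≤ sigma m := by
  have hsub : ({1, m} : Finset ℕ) ⊆ m.divisors := by
    intro d hd
    simp only [Finset.mem_insert, Finset.mem_singleton] at hd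
    rcases hd with rfl | rfl
    · exact Nat.one_mem_divisors.mpr (by omega)
    · exact Nat.mem_divisors_self _ (by omega)
  calc m + 1 = ∑ d ∈ ({1, m} : Finset ℕ), d := by
        rw [Finset.sum_pair (by omega : (1:ℕ) ≠ m)]; omega
    _ ≤ sigma m := Finset.sum_le_sum_of_subset hsub

lemma sigma_sq_le {m : ℕ} (hm : m ≠ 0) : sigma (m ^ 2) ≤ sigma m * sigma m := by
  classical
  have hm2 : m ^ 2 ≠ 0 := pow_ne_zero 2 hm
  -- map each divisor f of m^2 to (gcd f m, f / gcd f m)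
  set φ : ℕ → ℕ × ℕ := fun f => (Nat.gcd f m, f / Nat.gcd f m) with hφ
  have hval : ∀ f ∈ (m ^ 2).divisors, (φ f).1 * (φ f).2 = f := by
    intro f hf
    exact Nat.mul_div_cancel' (Nat.gcd_dvd_left f m)
  have hmem : ∀ f ∈ (m ^ 2).divisors, φ f ∈ m.divisors ×ˢ m.divisors := by
    intro f hf
    obtain ⟨hfd, _⟩ := Nat.mem_divisors.mp hf
    have hfne : f ≠ 0 := by
      rintro rfl
      exact hm2 (Nat.eq_zero_of_zero_dvd hfd)
    have hg0 : Nat.gcd f m ≠ 0 := fun h => hfne (Nat.eq_zero_of_gcd_eq_zero_left h)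
    refine Finset.mem_product.mpr ⟨Nat.mem_divisors.mpr ⟨Nat.gcd_dvd_right f m, hm⟩, ?_⟩
    refine Nat.mem_divisors.mpr ⟨?_, hm⟩
    rw [Nat.div_dvd_iff_dvd_mul (Nat.gcd_dvd_left f m) (Nat.pos_of_ne_zero hg0)]
    have : Nat.gcd f m * m = Nat.gcd (f * m) (m * m) := (Nat.gcd_mul_right f m m).symm
    rw [this]
    exact Nat.dvd_gcd (Dvd.intro m rfl) (by rw [← pow_two]; exact hfd)
  have hinj : ∀ f ∈ (m ^ 2).divisors, ∀ g ∈ (m ^ 2).divisors, φ f = φ g → f = g := by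
    intro f hf g hg heq
    have h1 := hval f hf
    have h2 := hval g hg
    rw [← h1, ← h2, heq]
  calc sigma (m ^ 2) = ∑ f ∈ (m ^ 2).divisors, (φ f).1 * (φ f).2 :=
        (Finset.sum_congr rfl hval).symm
    _ = ∑ p ∈ (m ^ 2).divisors.image φ, p.1 * p.2 := by
        rw [Finset.sum_image hinj]
    _ ≤ ∑ p ∈ m.divisors ×ˢ m.divisors, p.1 * p.2 := by
        apply Finset.sum_le_sum_of_subset
        intro p hp
        obtain ⟨f, hf, rfl⟩ := Finset.mem_image.mp hp
        exact hmem f hf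
    _ = sigma m * sigma m := by
        rw [sigma, Finset.sum_mul_sum]
        rw [Finset.sum_product]

theorem stmt13 (q k n N : ℕ)
    (hq : Nat.Prime q) (hq4 : q % 4 = 1) (hk4 : k % 4 = 1)
    (hco : Nat.Coprime q n) (hN : N = q ^ k * n ^ 2)
    (hodd : Odd N) (hperf : sigma N = 2 * N) (hk : k = 1) :
    Ir q * Ir n > 3 / (2 : ℝ) ^ ((1 : ℝ) / 3) - 1 := by
  subst hk hN
  rw [pow_one] at hperf hodd
  have hn0 : n ≠ 0 := by
    rintro rfl
    simp at hodd
  have hn1 : 1 < n := by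
    by_contra h
    have : n = 1 := by omega
    subst this
    rw [one_pow, mul_one, sigma_prime hq] at hperf
    have := hq.one_lt
    omega
  have hmul : sigma (q * n ^ 2) = sigma q * sigma (n ^ 2) :=
    sigma_mul_coprime (hco.pow_right 2)
  have hsq : sigma q = q + 1 := sigma_prime hq
  have hq0 : (0:ℝ) < q := by exact_mod_cast hq.pos
  have hnR : (0:ℝ) < n := by exact_mod_cast Nat.pos_of_ne_zero hn0
  set a := Ir q with ha
  set b := Ir n with hb
  have hkey : (sigma q : ℝ) * (sigma (n ^ 2) : ℝ) = 2 * q * n ^ 2 := by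
    rw [← Nat.cast_mul, ← hmul, hperf]
    push_cast
    ring
  have hc : a * ((sigma (n ^ 2) : ℝ) / (n : ℝ) ^ 2) = 2 := by
    rw [ha, Ir, div_mul_div_comm, hkey]
    field_simp
  have ha1 : 1 < a := by
    rw [ha, Ir, hsq]
    rw [lt_div_iff₀ hq0]
    push_cast
    linarith
  have hb1 : 1 < b := by
    rw [hb, Ir, lt_div_iff₀ hnR]
    have := sigma_lower hn1
    have : (n : ℝ) + 1 ≤ (sigma n : ℝ) := by exact_mod_cast this
    linarith
  have hab2 : 2 ≤ a * b ^ 2 := by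
    have hle : (sigma (n ^ 2) : ℝ) ≤ (sigma n : ℝ) ^ 2 := by
      have h := sigma_sq_le hn0
      have : (sigma (n ^ 2) : ℝ) ≤ (sigma n : ℝ) * (sigma n : ℝ) := by exact_mod_cast h
      nlinarith
    have hb2 : b ^ 2 = (sigma n : ℝ) ^ 2 / (n : ℝ) ^ 2 := by rw [hb, Ir, div_pow]
    have hstep : a * ((sigma (n ^ 2) : ℝ) / (n : ℝ) ^ 2) ≤ a * b ^ 2 := by
      rw [hb2]
      apply mul_le_mul_of_nonneg_left _ (by linarith : (0:ℝ) ≤ a)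
      exact div_le_div_of_nonneg_right hle (by positivity)
    linarith [hc ▸ hstep]
  -- AM-GM: 4 (a+b)^3 ≥ 27 a b^2 ≥ 54
  have hcube : 27 / 2 ≤ (a + b) ^ 3 := by
    nlinarith [sq_nonneg (2 * a - b), sq_nonneg (a - b), mul_pos (sub_pos.mpr ha1) (sub_pos.mpr hb1)]
  set t : ℝ := (2 : ℝ) ^ ((1 : ℝ) / 3) with ht
  have ht0 : 0 < t := Real.rpow_pos_of_pos (by norm_num) _
  have ht3 : t ^ 3 = 2 := by
    rw [ht, ← Real.rpow_natCast ((2:ℝ) ^ ((1:ℝ)/3)) 3, ← Real.rpow_mul (by norm_num)]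
    norm_num
  have hsum : 3 / t ≤ a + b := by
    rw [div_le_iff₀ ht0]
    have hx : 27 ≤ ((a + b) * t) ^ 3 := by
      rw [mul_pow, ht3]
      linarith
    nlinarith [hx, sq_nonneg ((a + b) * t - 3), sq_nonneg ((a + b) * t + 3),
      mul_pos (mul_pos (add_pos (by linarith : (0:ℝ) < a) (by linarith : (0:ℝ) < b)) ht0) ht0]
  nlinarith [mul_pos (sub_pos.mpr ha1) (sub_pos.mpr hb1)]
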